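/- Let g be C^{q+2} near 0. Then as y, w → 0 with w - y → 0, the difference T_q := g'(w) - g'_q satisfies T_q = (g^{(q+1)}(y)/(q+1)!)·(w-y)^q + O((w-y)^{q+1}), i.e. |T_q - (g^{(q+1)}(y)/(q+1)!)(w-y)^q| ≤ C·|w-y|^{q+1} for some constant C on a neighborhood of 0. -/

import Mathlib

open Finset Metric

lemma idw_eq {f : ℝ → ℝ} {s t : Set ℝ} {N m : ℕ} (hf : ContDiffOn ℝ N f t)
    (ht : IsOpen t) (hs : UniqueDiffOn ℝ s) (hst : s ⊆ t) (hm : m ≤ N) {x : ℝ}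
    (hx : x ∈ s) : iteratedDerivWithin m f s x = iteratedDeriv m f x := by
  have H := (hf.ftaylorSeriesWithin ht.uniqueDiffOn).mono hst
  have h1 := H.eq_iteratedFDerivWithin_of_uniqueDiffOn (by exact_mod_cast hm) hs hx
  rw [iteratedDerivWithin_eq_iteratedFDerivWithin, iteratedDeriv_eq_iteratedFDeriv, ← h1]
  have : ftaylorSeriesWithin ℝ f t x m = iteratedFDeriv ℝ m f x := by
    rw [ftaylorSeriesWithin]
    exact iteratedFDerivWithin_of_isOpen m ht (hst hx)
  rw [this]

lemma taylor_bound_le {f : ℝ → ℝ} {n : ℕ} {ε M : ℝ} (hε : 0 < ε)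
    (hf : ContDiffOn ℝ (n + 1) f (ball (0 : ℝ) ε))
    (hM : ∀ x ∈ closedBall (0 : ℝ) (ε / 2), |iteratedDeriv (n + 1) f x| ≤ M)
    {y w : ℝ} (hy : |y| ≤ ε / 2) (hw : |w| ≤ ε / 2) (hyw : y ≤ w) :
    |f w - ∑ k ∈ Finset.range (n + 1),
        iteratedDeriv k f y * (w - y) ^ k / (Nat.factorial k)|
      ≤ M * |w - y| ^ (n + 1) / (Nat.factorial n) := by
  rcases eq_or_lt_of_le hyw with rfl | hlt
  · rw [sub_self]
    have hsum : ∑ k ∈ Finset.range (n + 1),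
        iteratedDeriv k f y * (0 : ℝ) ^ k / (Nat.factorial k) = f y := by
      rw [Finset.sum_eq_single 0] <;> simp +contextual [zero_pow]
    rw [hsum, sub_self, abs_zero]
    simp [zero_pow]
  · have hcb : closedBall (0 : ℝ) (ε / 2) ⊆ ball (0 : ℝ) ε := by
      apply closedBall_subset_ball; linarith
    have hsub : Set.Icc y w ⊆ closedBall (0 : ℝ) (ε / 2) := by
      intro x hx
      rw [mem_closedBall, Real.dist_eq, sub_zero]
      rw [abs_le] at *
      exact ⟨le_trans hy.1 hx.1, le_trans hx.2 hw.2⟩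
    have hsub2 : Set.Icc y w ⊆ ball (0 : ℝ) ε := hsub.trans hcb
    have hud : UniqueDiffOn ℝ (Set.Icc y w) := uniqueDiffOn_Icc hlt
    have hDW : ∀ m ≤ n + 1, ∀ x ∈ Set.Icc y w,
        iteratedDerivWithin m f (Set.Icc y w) x = iteratedDeriv m f x :=
      fun m hm x hx => idw_eq hf isOpen_ball hud hsub2 hm hx
    have key := taylor_mean_remainder_bound (E := ℝ) hyw (hf.mono hsub2)
      (Set.right_mem_Icc.2 hyw) (C := M) (fun x hx => by
        rw [Real.norm_eq_abs, hDW (n + 1) le_rfl x hx]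
        exact hM x (hsub hx))
    rw [Real.norm_eq_abs, taylor_within_apply] at key
    have hsum : ∑ k ∈ Finset.range (n + 1),
        (((Nat.factorial k : ℝ))⁻¹ * (w - y) ^ k) • iteratedDerivWithin k f (Set.Icc y w) y
        = ∑ k ∈ Finset.range (n + 1),
          iteratedDeriv k f y * (w - y) ^ k / (Nat.factorial k) := by
      refine Finset.sum_congr rfl fun k hk => ?_
      rw [hDW k (Finset.mem_range.mp hk).le y (Set.left_mem_Icc.2 hyw)]
      rw [smul_eq_mul]; ring
    rw [hsum] at key
    calc _ ≤ M * (w - y) ^ (n + 1) / (Nat.factorial n) := key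
      _ = M * |w - y| ^ (n + 1) / (Nat.factorial n) := by
          rw [abs_of_nonneg (by linarith)]

lemma taylor_bound {f : ℝ → ℝ} {n : ℕ} {ε M : ℝ} (hε : 0 < ε)
    (hf : ContDiffOn ℝ (n + 1) f (ball (0 : ℝ) ε))
    (hM : ∀ x ∈ closedBall (0 : ℝ) (ε / 2), |iteratedDeriv (n + 1) f x| ≤ M)
    {y w : ℝ} (hy : |y| ≤ ε / 2) (hw : |w| ≤ ε / 2) :
    |f w - ∑ k ∈ Finset.range (n + 1),
        iteratedDeriv k f y * (w - y) ^ k / (Nat.factorial k)|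
      ≤ M * |w - y| ^ (n + 1) / (Nat.factorial n) := by
  rcases le_or_gt y w with hyw | hwy
  · exact taylor_bound_le hε hf hM hy hw hyw
  · set f' : ℝ → ℝ := fun x => f (-x) with hf'def
    have hcomp : ContDiffOn ℝ (n + 1) f' (ball (0 : ℝ) ε) := by
      apply hf.comp (contDiff_neg.contDiffOn (s := ball (0:ℝ) ε))
      intro x hx
      simpa [Real.dist_eq, abs_neg] using hx
    have hM' : ∀ x ∈ closedBall (0 : ℝ) (ε / 2), |iteratedDeriv (n + 1) f' x| ≤ M := by
      intro x hx
      rw [hf'def, iteratedDeriv_comp_neg]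
      rw [smul_eq_mul, abs_mul, abs_pow, abs_neg, abs_one, one_pow, one_mul]
      apply hM
      simpa [Real.dist_eq, abs_neg] using hx
    have hy' : |(-y : ℝ)| ≤ ε / 2 := by rwa [abs_neg]
    have hw' : |(-w : ℝ)| ≤ ε / 2 := by rwa [abs_neg]
    have key := taylor_bound_le hε hcomp hM' hy' hw' (by linarith)
    have e1 : f' (-w) = f w := by simp [hf'def]
    have e2 : ∑ k ∈ Finset.range (n + 1),
        iteratedDeriv k f' (-y) * (-w - -y) ^ k / (Nat.factorial k)
        = ∑ k ∈ Finset.range (n + 1),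
          iteratedDeriv k f y * (w - y) ^ k / (Nat.factorial k) := by
      refine Finset.sum_congr rfl fun k _ => ?_
      rw [hf'def, iteratedDeriv_comp_neg, neg_neg, smul_eq_mul]
      have : (-w - -y : ℝ) = (-1) * (w - y) := by ring
      rw [this, mul_pow]
      have h1 : ((-1 : ℝ)) ^ k * ((-1 : ℝ)) ^ k = 1 := by
        rw [← pow_add]; exact Even.neg_one_pow ⟨k, rfl⟩
      linear_combination (iteratedDeriv k f y * (w - y) ^ k / (Nat.factorial k : ℝ)) * h1
    have e3 : |(-w - -y : ℝ)| = |w - y| := by rw [abs_sub_comm]; congr 1; ring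
    rw [e1, e2, e3] at key
    exact key

lemma key_identity (q : ℕ) (hq : 2 ≤ q) (c : ℕ → ℝ) (t : ℝ) (ht : t ≠ 0) :
    (q : ℝ) * ((∑ k ∈ Finset.range (q + 2), c k * t ^ k / (Nat.factorial k)) - c 0) / t
      + ∑ k ∈ Finset.Icc 1 (q - 1), (((k : ℝ) - q) / (Nat.factorial k)) * c k * t ^ (k - 1)
    = (∑ k ∈ Finset.range (q + 1), c (k + 1) * t ^ k / (Nat.factorial k))
      - c (q + 1) / (Nat.factorial (q + 1)) * t ^ q := by
  have h1 : (∑ k ∈ Finset.range (q + 2), c k * t ^ k / (Nat.factorial k)) - c 0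
      = ∑ k ∈ Finset.range (q + 1), c (k + 1) * t ^ (k + 1) / (Nat.factorial (k + 1)) := by
    rw [Finset.sum_range_succ' (fun k => c k * t ^ k / (Nat.factorial k)) (q + 1)]
    simp
  have h2 : (q : ℝ) * (∑ k ∈ Finset.range (q + 1),
        c (k + 1) * t ^ (k + 1) / (Nat.factorial (k + 1))) / t
      = ∑ k ∈ Finset.range (q + 1), (q : ℝ) * c (k + 1) * t ^ k / (Nat.factorial (k + 1)) := by
    rw [Finset.mul_sum, Finset.sum_div]
    refine Finset.sum_congr rfl fun k _ => ?_
    rw [pow_succ]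
    field_simp
  have h3 : ∑ k ∈ Finset.Icc 1 (q - 1), (((k : ℝ) - q) / (Nat.factorial k)) * c k * t ^ (k - 1)
      = ∑ k ∈ Finset.range (q - 1),
          (((k : ℝ) + 1 - q) / (Nat.factorial (k + 1))) * c (k + 1) * t ^ k := by
    have hIcc : Finset.Icc 1 (q - 1) = Finset.Ico 1 q := by
      rw [← Finset.Ico_add_one_right_eq_Icc]; congr 1; omega
    rw [hIcc, Finset.sum_Ico_eq_sum_range]
    refine Finset.sum_congr rfl fun k _ => ?_
    have e : 1 + k = k + 1 := by omega
    rw [e]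
    push_cast
    simp
  rw [h1, h2, h3]
  have h4 : ∀ k : ℕ, c (k + 1) * t ^ k / (Nat.factorial k)
      - (q : ℝ) * c (k + 1) * t ^ k / (Nat.factorial (k + 1))
      = (((k : ℝ) + 1 - q) / (Nat.factorial (k + 1))) * c (k + 1) * t ^ k := by
    intro k
    rw [Nat.factorial_succ]
    have hk : (Nat.factorial k : ℝ) ≠ 0 := Nat.cast_ne_zero.2 (Nat.factorial_ne_zero k)
    field_simp
    push_cast
    ring
  have h5 : ∑ k ∈ Finset.range (q + 1), (q : ℝ) * c (k + 1) * t ^ k / (Nat.factorial (k + 1))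
      = ∑ k ∈ Finset.range (q + 1), (c (k + 1) * t ^ k / (Nat.factorial k)
          - (((k : ℝ) + 1 - q) / (Nat.factorial (k + 1))) * c (k + 1) * t ^ k) := by
    refine Finset.sum_congr rfl fun k _ => ?_
    rw [← h4 k]; ring
  rw [h5, Finset.sum_sub_distrib]
  have h6 : ∑ k ∈ Finset.range (q + 1),
      (((k : ℝ) + 1 - q) / (Nat.factorial (k + 1))) * c (k + 1) * t ^ k
      = (∑ k ∈ Finset.range (q - 1),
          (((k : ℝ) + 1 - q) / (Nat.factorial (k + 1))) * c (k + 1) * t ^ k)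
        + c (q + 1) / (Nat.factorial (q + 1)) * t ^ q := by
    have e1 : q + 1 = (q - 1) + 1 + 1 := by omega
    rw [e1, Finset.sum_range_succ, Finset.sum_range_succ]
    have e2 : q - 1 + 1 = q := by omega
    rw [e2]
    have e3 : ((q : ℝ) - 1) + 1 - q = 0 := by
      have : (1 : ℕ) ≤ q := by omega
      ring
    have e4 : (((q - 1 : ℕ) : ℝ) + 1 - q) = 0 := by
      have : ((q - 1 : ℕ) : ℝ) = (q : ℝ) - 1 := by
        push_cast [Nat.cast_sub (by omega : 1 ≤ q)]; ring
      rw [this]; ring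
    rw [e4]
    have e5 : (((q : ℝ)) + 1 - q) = 1 := by ring
    rw [e5]
    ring
  rw [h6]
  ring

theorem remainder_asymptotic (q : ℕ) (hq : 2 ≤ q) (g : ℝ → ℝ)
    (hg : ∃ ε > 0, ContDiffOn ℝ (q + 2) g (Metric.ball (0 : ℝ) ε)) :
    ∃ C > 0, ∃ δ > 0, ∀ y w : ℝ, |y| < δ → |w| < δ → y ≠ w →
      |(deriv g w -
          (q * (g w - g y) / (w - y) +
            ∑ k ∈ Finset.Icc 1 (q - 1),
              (((k : ℝ) - q) / (Nat.factorial k)) * iteratedDeriv k g y * (w - y) ^ (k - 1)))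
        - (iteratedDeriv (q + 1) g y / (Nat.factorial (q + 1))) * (w - y) ^ q|
        ≤ C * |w - y| ^ (q + 1) := by
  obtain ⟨ε, hε, hg⟩ := hg
  have hg2 : ContDiffOn ℝ ((q + 2 : ℕ)) g (ball (0 : ℝ) ε) := by exact_mod_cast hg
  -- continuity of (q+2)-th derivative, bound on compact closed ball
  have hcont : ContinuousOn (iteratedDeriv (q + 2) g) (ball (0 : ℝ) ε) := by
    have h1 := hg2.continuousOn_iteratedDerivWithin (m := q + 2) le_rfl
      isOpen_ball.uniqueDiffOn
    exact h1.congr fun x hx =>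
      (idw_eq hg2 isOpen_ball isOpen_ball.uniqueDiffOn subset_rfl le_rfl hx).symm
  have hcb : closedBall (0 : ℝ) (ε / 2) ⊆ ball (0 : ℝ) ε := by
    apply closedBall_subset_ball; linarith
  obtain ⟨M, hM⟩ := (isCompact_closedBall (0 : ℝ) (ε / 2)).exists_bound_of_continuousOn
    (hcont.mono hcb)
  have hM' : ∀ x ∈ closedBall (0 : ℝ) (ε / 2), |iteratedDeriv (q + 2) g x| ≤ M := by
    intro x hx; rw [← Real.norm_eq_abs]; exact hM x hx
  have hM0 : 0 ≤ M :=
    le_trans (norm_nonneg _) (hM 0 (by simp [mem_closedBall]; linarith))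
  refine ⟨2 * M + 1, by linarith, ε / 2, by linarith, fun y w hyd hwd hne => ?_⟩
  have hy : |y| ≤ ε / 2 := hyd.le
  have hw : |w| ≤ ε / 2 := hwd.le
  have ht : w - y ≠ 0 := sub_ne_zero.2 (Ne.symm hne)
  have habs : 0 < |w - y| := abs_pos.2 ht
  -- deriv g is C^{q+1}
  have hdg : ContDiffOn ℝ ((q : WithTop ℕ∞) + 1) (deriv g) (ball (0 : ℝ) ε) := by
    apply hg.deriv_of_isOpen isOpen_ball
    rw [add_assoc]; norm_num
  -- Taylor bound for deriv g, order q
  have hMd : ∀ x ∈ closedBall (0 : ℝ) (ε / 2),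
      |iteratedDeriv (q + 1) (deriv g) x| ≤ M := by
    intro x hx
    rw [← iteratedDeriv_succ']
    exact hM' x hx
  have hS := taylor_bound hε hdg hMd hy hw
  have hB : ∑ k ∈ Finset.range (q + 1),
      iteratedDeriv k (deriv g) y * (w - y) ^ k / (Nat.factorial k)
      = ∑ k ∈ Finset.range (q + 1),
        iteratedDeriv (k + 1) g y * (w - y) ^ k / (Nat.factorial k) := by
    refine Finset.sum_congr rfl fun k _ => ?_
    rw [iteratedDeriv_succ']
  rw [hB] at hS
  -- Taylor bound for g, order q+1
  have hg3 : ContDiffOn ℝ ((q + 1 : ℕ) + 1) g (ball (0 : ℝ) ε) := by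
    exact_mod_cast hg
  have hMg : ∀ x ∈ closedBall (0 : ℝ) (ε / 2),
      |iteratedDeriv ((q + 1) + 1) g x| ≤ M := hM'
  have hR := taylor_bound hε hg3 hMg hy hw
  simp only [show q + 1 + 1 = q + 2 from rfl] at hR
  have key := key_identity q hq (fun k => iteratedDeriv k g y) (w - y) ht
  simp only [iteratedDeriv_zero] at key
  have hE : (deriv g w -
        ((q : ℝ) * (g w - g y) / (w - y) +
          ∑ k ∈ Finset.Icc 1 (q - 1),
            (((k : ℝ) - q) / (Nat.factorial k)) * iteratedDeriv k g y * (w - y) ^ (k - 1)))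
      - (iteratedDeriv (q + 1) g y / (Nat.factorial (q + 1))) * (w - y) ^ q
      = (deriv g w - ∑ k ∈ Finset.range (q + 1),
          iteratedDeriv (k + 1) g y * (w - y) ^ k / (Nat.factorial k))
        - (q : ℝ) * (g w - ∑ k ∈ Finset.range (q + 2),
            iteratedDeriv k g y * (w - y) ^ k / (Nat.factorial k)) / (w - y) := by
    linear_combination (-1 : ℝ) * key
  rw [hE]
  have step1 : |(deriv g w - ∑ k ∈ Finset.range (q + 1),
          iteratedDeriv (k + 1) g y * (w - y) ^ k / (Nat.factorial k))
        - (q : ℝ) * (g w - ∑ k ∈ Finset.range (q + 2),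
            iteratedDeriv k g y * (w - y) ^ k / (Nat.factorial k)) / (w - y)|
      ≤ |deriv g w - ∑ k ∈ Finset.range (q + 1),
          iteratedDeriv (k + 1) g y * (w - y) ^ k / (Nat.factorial k)|
        + (q : ℝ) * |g w - ∑ k ∈ Finset.range (q + 2),
            iteratedDeriv k g y * (w - y) ^ k / (Nat.factorial k)| / |w - y| := by
    refine le_trans (abs_sub _ _) ?_
    rw [abs_div, abs_mul, Nat.abs_cast]
  have step2 : (q : ℝ) * |g w - ∑ k ∈ Finset.range (q + 2),
        iteratedDeriv k g y * (w - y) ^ k / (Nat.factorial k)| / |w - y|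
      ≤ (q : ℝ) * (M * |w - y| ^ (q + 2) / (Nat.factorial (q + 1))) / |w - y| := by
    gcongr
  have e1 : (q : ℝ) * (M * |w - y| ^ (q + 2) / (Nat.factorial (q + 1))) / |w - y|
      = ((q : ℝ) / (Nat.factorial (q + 1))) * (M * |w - y| ^ (q + 1)) := by
    rw [pow_succ]
    field_simp
  have hq1 : (q : ℝ) ≤ (Nat.factorial (q + 1) : ℝ) := by
    exact_mod_cast (Nat.le_succ q).trans (Nat.self_le_factorial (q + 1))
  have hX : (0 : ℝ) ≤ |w - y| ^ (q + 1) := by positivity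
  have b2 : ((q : ℝ) / (Nat.factorial (q + 1))) * (M * |w - y| ^ (q + 1))
      ≤ M * |w - y| ^ (q + 1) := by
    have h1 : (q : ℝ) / (Nat.factorial (q + 1)) ≤ 1 :=
      (div_le_one (by positivity)).2 hq1
    nlinarith [mul_nonneg hM0 hX]
  have b1 : M * |w - y| ^ (q + 1) / (Nat.factorial q) ≤ M * |w - y| ^ (q + 1) :=
    div_le_self (by positivity) (Nat.one_le_cast.2 q.factorial_pos)
  calc _ ≤ _ := step1
    _ ≤ M * |w - y| ^ (q + 1) / (Nat.factorial q)
        + ((q : ℝ) / (Nat.factorial (q + 1))) * (M * |w - y| ^ (q + 1)) := by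
        rw [← e1]
        exact add_le_add hS step2
    _ ≤ M * |w - y| ^ (q + 1) + M * |w - y| ^ (q + 1) := add_le_add b1 b2
    _ ≤ (2 * M + 1) * |w - y| ^ (q + 1) := by nlinarith
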